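/- arXiv:1705.09344 — 2 statements merged into one kernel-verified Lean document; each statement's English description precedes it below -/
import Mathlib

section
/- The symmetrized function β(x₁,x₂,y₁,y₂,α) = Sym_{x₁,x₂} [ ϑ(α y₁/x₁) ϑ(y₂/x₁) ϑ(h y₁/x₂) ϑ(α h y₂/x₂) · ϑ(h x₂/x₁)/ϑ(x₂/x₁) ] is symmetric under exchanging y₁ and y₂. -/
open Complex

/-- The theta function in additive variables: `θ(u) = ϑ(e^{2πiu})` with
`ϑ(x) = (x^{1/2} − x^{−1/2}) ∏_{s≥0}(1−q^{s+1}x)(1−q^{s+1}/x)`, `q = e^{2πiτ}`,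
`x^{1/2} = e^{πiu}`. -/
noncomputable def ellTheta (τ u : ℂ) : ℂ :=
  (Complex.exp ((Real.pi : ℂ) * Complex.I * u)
      - Complex.exp (-((Real.pi : ℂ) * Complex.I * u))) *
    (∏' s : ℕ, (1 - Complex.exp (2 * (Real.pi : ℂ) * Complex.I * τ) ^ (s + 1) *
        Complex.exp (2 * (Real.pi : ℂ) * Complex.I * u))) *
    (∏' s : ℕ, (1 - Complex.exp (2 * (Real.pi : ℂ) * Complex.I * τ) ^ (s + 1) *
        Complex.exp (-(2 * (Real.pi : ℂ) * Complex.I * u))))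

noncomputable section
namespace EllProof
variable (τ : ℂ)

def q : ℂ := Complex.exp (2 * (Real.pi : ℂ) * Complex.I * τ)

def P (w : ℂ) : ℂ := ∏' s : ℕ, (1 - q τ ^ (s + 1) * w)

variable {τ}

lemma norm_q_lt_one (hτ : 0 < τ.im) : ‖q τ‖ < 1 := by
  rw [q, Complex.norm_exp]
  have : (2 * (Real.pi : ℂ) * Complex.I * τ).re = -(2 * Real.pi * τ.im) := by
    simp [Complex.mul_re, Complex.mul_im]
  rw [this]
  have h : (0:ℝ) < 2 * Real.pi * τ.im := by positivity
  exact Real.exp_lt_one_iff.mpr (by linarith)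

lemma q_ne_zero : q τ ≠ 0 := Complex.exp_ne_zero _

end EllProof

namespace EllProof
open Filter Topology

lemma hasProd_zero_of_eq_zero {f : ℕ → ℂ} {i₀ : ℕ} (h : f i₀ = 0) : HasProd f 0 := by
  have he : ∀ᶠ s : Finset ℕ in atTop, ∏ i ∈ s, f i = 0 := by
    filter_upwards [Filter.eventually_ge_atTop ({i₀} : Finset ℕ)] with s hs
    exact Finset.prod_eq_zero (hs (Finset.mem_singleton_self i₀)) h
  exact (Filter.tendsto_congr' (by filter_upwards [he] with s hs; exact hs.symm)).mp
    tendsto_const_nhds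

lemma norm_log_one_sub_le {z : ℂ} (hz : ‖z‖ ≤ 1/2) : ‖Complex.log (1 - z)‖ ≤ (3/2) * ‖z‖ := by
  have := Complex.norm_log_one_add_half_le_self (z := -z) (by simpa using hz)
  simpa [sub_eq_add_neg] using this

variable {τ : ℂ}

lemma factor_ne_zero_of_norm {c : ℂ} (h : ‖c‖ < 1) : 1 - c ≠ 0 := by
  intro hc
  rw [sub_eq_zero] at hc
  rw [← hc] at h
  simp at h

lemma summable_log_factor (hq : ‖q τ‖ < 1) (w : ℂ)
    (h : ∀ s : ℕ, 1 - q τ ^ (s + 1) * w ≠ 0) :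
    Summable (fun s : ℕ => Complex.log (1 - q τ ^ (s + 1) * w)) := by
  apply Summable.of_norm_bounded_eventually (g := fun s : ℕ => (3/2) * (‖q τ‖ ^ (s+1) * ‖w‖))
  · exact (summable_geometric_of_lt_one (norm_nonneg _) hq).mul_right _ |>.mul_left _
      |>.comp_injective (add_left_injective 1)
  · rw [Nat.cofinite_eq_atTop]
    have h0 : Tendsto (fun s : ℕ => ‖q τ‖ ^ (s+1) * ‖w‖) atTop (𝓝 (0 * ‖w‖)) :=
      ((tendsto_pow_atTop_nhds_zero_of_lt_one (norm_nonneg _) hq).comp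
        (tendsto_add_atTop_nat 1)).mul_const _
    rw [zero_mul] at h0
    filter_upwards [h0.eventually_le_const (by norm_num : (0:ℝ) < 1/2)] with s hs
    have hb : ‖q τ ^ (s+1) * w‖ ≤ 1/2 := by
      rw [norm_mul, norm_pow]; exact hs
    calc ‖Complex.log (1 - q τ ^ (s + 1) * w)‖ ≤ (3/2) * ‖q τ ^ (s+1) * w‖ :=
          norm_log_one_sub_le hb
      _ = (3/2) * (‖q τ‖ ^ (s+1) * ‖w‖) := by rw [norm_mul, norm_pow]

lemma P_eq_exp (hq : ‖q τ‖ < 1) (w : ℂ) (h : ∀ s : ℕ, 1 - q τ ^ (s + 1) * w ≠ 0) :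
    P τ w = Complex.exp (∑' s : ℕ, Complex.log (1 - q τ ^ (s + 1) * w)) := by
  exact (Complex.cexp_tsum_eq_tprod (f := fun s : ℕ => 1 - q τ ^ (s + 1) * w) h
    (summable_log_factor hq w h)).symm

lemma P_ne_zero (hq : ‖q τ‖ < 1) (w : ℂ) (h : ∀ s : ℕ, 1 - q τ ^ (s + 1) * w ≠ 0) :
    P τ w ≠ 0 := by rw [P_eq_exp hq w h]; exact Complex.exp_ne_zero _

lemma P_eq_zero (w : ℂ) (h : ∃ s : ℕ, 1 - q τ ^ (s + 1) * w = 0) : P τ w = 0 := by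
  obtain ⟨s, hs⟩ := h
  exact (hasProd_zero_of_eq_zero (f := fun s : ℕ => 1 - q τ ^ (s + 1) * w) hs).tprod_eq

lemma P_zero_iff (hq : ‖q τ‖ < 1) (w : ℂ) :
    P τ w = 0 ↔ ∃ s : ℕ, q τ ^ (s + 1) * w = 1 := by
  constructor
  · intro h
    by_contra hc
    push_neg at hc
    exact P_ne_zero hq w (fun s hs => hc s (by rwa [sub_eq_zero, eq_comm] at hs)) h
  · intro ⟨s, hs⟩
    exact P_eq_zero w ⟨s, by rw [hs, sub_self]⟩

lemma P_mul_shift (hq : ‖q τ‖ < 1) (w : ℂ) :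
    P τ w = (1 - q τ * w) * P τ (q τ * w) := by
  by_cases h : ∀ s : ℕ, 1 - q τ ^ (s + 1) * w ≠ 0
  · have h' : ∀ s : ℕ, 1 - q τ ^ (s + 1) * (q τ * w) ≠ 0 := by
      intro s
      have := h (s + 1)
      rw [pow_succ] at this
      convert this using 2
      ring
    rw [P_eq_exp hq w h, P_eq_exp hq _ h']
    have hsum := summable_log_factor hq w h
    rw [Summable.tsum_eq_zero_add hsum]
    rw [Complex.exp_add]
    congr 1
    · rw [Complex.exp_log (h 0)]; ring_nf
    · congr 1
      apply tsum_congr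
      intro s
      congr 2
      rw [pow_succ]
      ring
  · push_neg at h
    obtain ⟨s, hs⟩ := h
    match s with
    | 0 =>
      rw [P_eq_zero w ⟨0, hs⟩]
      rw [show (1 : ℂ) - q τ * w = 1 - q τ ^ (0+1) * w by ring, hs, zero_mul]
    | s + 1 =>
      rw [P_eq_zero w ⟨s+1, hs⟩, P_eq_zero (q τ * w) ⟨s, by rw [← hs]; ring_nf⟩]
      ring

end EllProof

namespace EllProof
open Filter Topology Metric

variable {τ : ℂ}

lemma P_split (hq : ‖q τ‖ < 1) (w : ℂ) (N : ℕ) :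
    P τ w = (∏ s ∈ Finset.range N, (1 - q τ ^ (s + 1) * w)) * P τ (q τ ^ N * w) := by
  induction N with
  | zero => simp
  | succ N ih =>
    rw [ih, P_mul_shift hq (q τ ^ N * w), Finset.prod_range_succ]
    rw [show q τ * (q τ ^ N * w) = q τ ^ (N + 1) * w by ring]
    ring

lemma P_differentiable (hq : ‖q τ‖ < 1) : Differentiable ℂ (P τ) := by
  intro w₀
  -- choose N such that ‖q‖^N * (‖w₀‖ + 1) ≤ 1/2
  obtain ⟨N, hN⟩ : ∃ N : ℕ, ‖q τ‖ ^ N * (‖w₀‖ + 1) ≤ 1/2 := by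
    have h0 : Tendsto (fun n : ℕ => ‖q τ‖ ^ n * (‖w₀‖ + 1)) atTop (𝓝 (0 * (‖w₀‖ + 1))) :=
      (tendsto_pow_atTop_nhds_zero_of_lt_one (norm_nonneg _) hq).mul_const _
    rw [zero_mul] at h0
    exact (h0.eventually_le_const (by norm_num : (0:ℝ) < 1/2)).exists
  set U : Set ℂ := ball (0:ℂ) (‖w₀‖ + 1) with hU
  have hUopen : IsOpen U := isOpen_ball
  have hw₀U : w₀ ∈ U := by
    simp only [hU, mem_ball, dist_eq_norm, sub_zero]
    linarith
  -- key norm bound on U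
  have key : ∀ s : ℕ, ∀ w ∈ U, ‖q τ ^ (s + 1) * (q τ ^ N * w)‖ ≤ (1/2) * ‖q τ‖ ^ (s+1) := by
    intro s w hw
    have hwn : ‖w‖ ≤ ‖w₀‖ + 1 := by
      simp only [hU, mem_ball, dist_eq_norm, sub_zero] at hw
      exact hw.le
    have : ‖q τ ^ (s + 1) * (q τ ^ N * w)‖ = ‖q τ‖ ^ (s+1) * (‖q τ‖ ^ N * ‖w‖) := by
      simp [norm_mul, norm_pow]
    rw [this]
    have h1 : ‖q τ‖ ^ N * ‖w‖ ≤ ‖q τ‖ ^ N * (‖w₀‖ + 1) :=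
      mul_le_mul_of_nonneg_left hwn (by positivity)
    have h2 : ‖q τ‖ ^ N * ‖w‖ ≤ 1/2 := h1.trans hN
    calc ‖q τ‖ ^ (s+1) * (‖q τ‖ ^ N * ‖w‖) ≤ ‖q τ‖ ^ (s+1) * (1/2) :=
          mul_le_mul_of_nonneg_left h2 (by positivity)
      _ = (1/2) * ‖q τ‖ ^ (s+1) := by ring
  have keyhalf : ∀ s : ℕ, ∀ w ∈ U, ‖q τ ^ (s + 1) * (q τ ^ N * w)‖ ≤ 1/2 := by
    intro s w hw
    refine (key s w hw).trans ?_
    have : ‖q τ‖ ^ (s+1) ≤ 1 := pow_le_one₀ (norm_nonneg _) hq.le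
    nlinarith
  have keylt : ∀ s : ℕ, ∀ w ∈ U, ‖q τ ^ (s + 1) * (q τ ^ N * w)‖ < 1 := by
    intro s w hw
    exact lt_of_le_of_lt (keyhalf s w hw) (by norm_num)
  -- the tail sum is differentiable on U
  have hT : DifferentiableOn ℂ
      (fun w => ∑' s : ℕ, Complex.log (1 - q τ ^ (s + 1) * (q τ ^ N * w))) U := by
    apply differentiableOn_tsum_of_summable_norm
      (u := fun s : ℕ => (3/2) * ((1/2) * ‖q τ‖ ^ (s+1)))
    · exact ((summable_geometric_of_lt_one (norm_nonneg _) hq).mul_left _ |>.mul_left _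
        |>.comp_injective (add_left_injective 1))
    · intro s
      apply DifferentiableOn.clog
      · exact (differentiableOn_const _).sub
          ((differentiableOn_id.const_mul _).const_mul _)
      · intro w hw
        rw [sub_eq_add_neg]
        apply Complex.mem_slitPlane_of_norm_lt_one
        rw [norm_neg]
        exact keylt s w hw
    · exact hUopen
    · intro s w hw
      exact (norm_log_one_sub_le (keyhalf s w hw)).trans
        (by have := key s w hw; nlinarith)
  -- P agrees with a differentiable function on U
  have heq : ∀ w ∈ U, P τ w = (∏ s ∈ Finset.range N, (1 - q τ ^ (s + 1) * w)) *
      Complex.exp (∑' s : ℕ, Complex.log (1 - q τ ^ (s + 1) * (q τ ^ N * w))) := by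
    intro w hw
    rw [P_split hq w N]
    congr 1
    exact P_eq_exp hq _ (fun s => factor_ne_zero_of_norm (keylt s w hw))
  have hg : DifferentiableOn ℂ (fun w => (∏ s ∈ Finset.range N, (1 - q τ ^ (s + 1) * w)) *
      Complex.exp (∑' s : ℕ, Complex.log (1 - q τ ^ (s + 1) * (q τ ^ N * w)))) U := by
    apply DifferentiableOn.mul
    · apply DifferentiableOn.fun_finsetProd
      intro i _
      exact (differentiableOn_const _).sub (differentiableOn_id.const_mul _)
    · exact hT.cexp
  have : P τ =ᶠ[𝓝 w₀] _ := Filter.eventuallyEq_of_mem (hUopen.mem_nhds hw₀U) heq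
  exact (hg.differentiableAt (hUopen.mem_nhds hw₀U)).congr_of_eventuallyEq this

end EllProof

namespace EllProof
open Filter Topology Metric

variable {τ : ℂ}

/-- Link `ellTheta` to our `P`. -/
lemma theta_eq (τ u : ℂ) : ellTheta τ u =
    (Complex.exp ((Real.pi : ℂ) * Complex.I * u) -
      Complex.exp (-((Real.pi : ℂ) * Complex.I * u))) *
    P τ (Complex.exp (2 * (Real.pi : ℂ) * Complex.I * u)) *
    P τ (Complex.exp (-(2 * (Real.pi : ℂ) * Complex.I * u))) := rfl

lemma theta_differentiable (hτ : 0 < τ.im) : Differentiable ℂ (ellTheta τ) := by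
  have hq := norm_q_lt_one hτ
  have h1 : Differentiable ℂ (fun u : ℂ => Complex.exp ((Real.pi : ℂ) * Complex.I * u)) :=
    (differentiable_id.const_mul _).cexp
  have h2 : Differentiable ℂ (fun u : ℂ => Complex.exp (-((Real.pi : ℂ) * Complex.I * u))) :=
    ((differentiable_id.const_mul _).neg).cexp
  have h3 : Differentiable ℂ (fun u : ℂ => P τ (Complex.exp (2 * (Real.pi : ℂ) * Complex.I * u))) :=
    (P_differentiable hq).comp ((differentiable_id.const_mul _).cexp)
  have h4 : Differentiable ℂ
      (fun u : ℂ => P τ (Complex.exp (-(2 * (Real.pi : ℂ) * Complex.I * u)))) :=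
    (P_differentiable hq).comp (((differentiable_id.const_mul _).neg).cexp)
  exact (((h1.sub h2).mul h3).mul h4)

lemma theta_odd (τ u : ℂ) : ellTheta τ (-u) = -ellTheta τ u := by
  rw [theta_eq, theta_eq]
  rw [show (Real.pi : ℂ) * Complex.I * -u = -((Real.pi : ℂ) * Complex.I * u) by ring,
    show 2 * (Real.pi : ℂ) * Complex.I * -u = -(2 * (Real.pi : ℂ) * Complex.I * u) by ring,
    neg_neg]
  ring

lemma theta_zero (τ : ℂ) : ellTheta τ 0 = 0 := by
  rw [theta_eq]; simp

lemma theta_periodic (τ u : ℂ) : ellTheta τ (u + 1) = -ellTheta τ u := by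
  rw [theta_eq, theta_eq]
  have e1 : (Real.pi : ℂ) * Complex.I * (u + 1) = (Real.pi : ℂ) * Complex.I * u +
      (Real.pi : ℂ) * Complex.I := by ring
  have e2 : 2 * (Real.pi : ℂ) * Complex.I * (u + 1) = 2 * (Real.pi : ℂ) * Complex.I * u +
      2 * (Real.pi : ℂ) * Complex.I := by ring
  have hpi : Complex.exp ((Real.pi : ℂ) * Complex.I) = -1 := Complex.exp_pi_mul_I
  have h2pi : Complex.exp (2 * (Real.pi : ℂ) * Complex.I) = 1 := by
    exact Complex.exp_two_pi_mul_I
  rw [e1, e2, neg_add, neg_add]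
  simp only [Complex.exp_add, Complex.exp_neg, hpi, h2pi, inv_one, mul_one, inv_neg]
  ring

end EllProof

namespace EllProof
open Filter Topology Metric

variable {τ : ℂ}

lemma theta_quasi (hτ : 0 < τ.im) (u : ℂ) :
    ellTheta τ (u + τ) =
      -Complex.exp (-((Real.pi : ℂ) * Complex.I * τ)) *
        Complex.exp (-(2 * (Real.pi : ℂ) * Complex.I * u)) * ellTheta τ u := by
  have hq := norm_q_lt_one hτ
  have h2u : Complex.exp (2 * (Real.pi : ℂ) * Complex.I * u) =
      Complex.exp ((Real.pi : ℂ) * Complex.I * u) ^ 2 := by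
    rw [sq, ← Complex.exp_add]; congr 1; ring
  have h2t : q τ = Complex.exp ((Real.pi : ℂ) * Complex.I * τ) ^ 2 := by
    rw [q, sq, ← Complex.exp_add]; congr 1; ring
  have hA : Complex.exp ((Real.pi : ℂ) * Complex.I * (u + τ)) =
      Complex.exp ((Real.pi : ℂ) * Complex.I * u) * Complex.exp ((Real.pi : ℂ) * Complex.I * τ) := by
    rw [← Complex.exp_add]; congr 1; ring
  have hB : Complex.exp (-((Real.pi : ℂ) * Complex.I * (u + τ))) =
      (Complex.exp ((Real.pi : ℂ) * Complex.I * u) * Complex.exp ((Real.pi : ℂ) * Complex.I * τ))⁻¹ := by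
    rw [Complex.exp_neg, hA]
  have hC : Complex.exp (2 * (Real.pi : ℂ) * Complex.I * (u + τ)) =
      q τ * Complex.exp ((Real.pi : ℂ) * Complex.I * u) ^ 2 := by
    rw [q, ← h2u, ← Complex.exp_add]; congr 1; ring
  have hD : q τ * Complex.exp (-(2 * (Real.pi : ℂ) * Complex.I * (u + τ))) =
      Complex.exp (-(2 * (Real.pi : ℂ) * Complex.I * u)) := by
    rw [q, ← Complex.exp_add]; congr 1; ring
  have hE : Complex.exp (-(2 * (Real.pi : ℂ) * Complex.I * u)) =
      (Complex.exp ((Real.pi : ℂ) * Complex.I * u) ^ 2)⁻¹ := by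
    rw [Complex.exp_neg, h2u]
  have hF : Complex.exp (-((Real.pi : ℂ) * Complex.I * τ)) =
      (Complex.exp ((Real.pi : ℂ) * Complex.I * τ))⁻¹ := Complex.exp_neg _
  have hG : Complex.exp (-((Real.pi : ℂ) * Complex.I * u)) =
      (Complex.exp ((Real.pi : ℂ) * Complex.I * u))⁻¹ := Complex.exp_neg _
  have hP2 : P τ (Complex.exp (-(2 * (Real.pi : ℂ) * Complex.I * (u + τ)))) =
      (1 - (Complex.exp ((Real.pi : ℂ) * Complex.I * u) ^ 2)⁻¹) *
        P τ ((Complex.exp ((Real.pi : ℂ) * Complex.I * u) ^ 2)⁻¹) := by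
    rw [P_mul_shift hq (Complex.exp (-(2 * (Real.pi : ℂ) * Complex.I * (u + τ)))), hD, hE]
  have hP1 : P τ (Complex.exp ((Real.pi : ℂ) * Complex.I * u) ^ 2) =
      (1 - q τ * Complex.exp ((Real.pi : ℂ) * Complex.I * u) ^ 2) *
        P τ (q τ * Complex.exp ((Real.pi : ℂ) * Complex.I * u) ^ 2) := P_mul_shift hq _
  rw [theta_eq, theta_eq, hA, hB, hC, hP2, hE, hF, hG, h2u, hP1, h2t]
  have ht : Complex.exp ((Real.pi : ℂ) * Complex.I * u) ≠ 0 := Complex.exp_ne_zero _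
  have hp : Complex.exp ((Real.pi : ℂ) * Complex.I * τ) ≠ 0 := Complex.exp_ne_zero _
  field_simp
  ring

lemma two_pi_I_ne_zero' : (2 : ℂ) * (Real.pi : ℂ) * Complex.I ≠ 0 := by
  simp [Real.pi_ne_zero, Complex.I_ne_zero]

lemma exp_two_pi_eq_one_iff (z : ℂ) :
    Complex.exp (2 * (Real.pi : ℂ) * Complex.I * z) = 1 ↔ ∃ k : ℤ, z = k := by
  rw [Complex.exp_eq_one_iff]
  constructor
  · rintro ⟨k, hk⟩
    refine ⟨k, ?_⟩
    have : 2 * (Real.pi : ℂ) * Complex.I * z = 2 * (Real.pi : ℂ) * Complex.I * k := by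
      rw [hk]; ring
    exact mul_left_cancel₀ two_pi_I_ne_zero' this
  · rintro ⟨k, hk⟩
    exact ⟨k, by rw [hk]; ring⟩

lemma theta_zero_iff (hτ : 0 < τ.im) (u : ℂ) :
    ellTheta τ u = 0 ↔ ∃ m n : ℤ, u = m + n * τ := by
  have hq := norm_q_lt_one hτ
  rw [theta_eq, mul_eq_zero, mul_eq_zero]
  have hS : (Complex.exp ((Real.pi : ℂ) * Complex.I * u) -
      Complex.exp (-((Real.pi : ℂ) * Complex.I * u))) = 0 ↔ ∃ k : ℤ, u = k := by
    rw [sub_eq_zero, Complex.exp_eq_exp_iff_exp_sub_eq_one,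
      show (Real.pi : ℂ) * Complex.I * u - -((Real.pi : ℂ) * Complex.I * u) =
        2 * (Real.pi : ℂ) * Complex.I * u by ring]
    exact exp_two_pi_eq_one_iff u
  have hfac : ∀ (s : ℕ) (v : ℂ), q τ ^ (s + 1) * Complex.exp (2 * (Real.pi : ℂ) * Complex.I * v)
      = Complex.exp (2 * (Real.pi : ℂ) * Complex.I * ((s+1) * τ + v)) := by
    intro s v
    rw [q, ← Complex.exp_nat_mul, ← Complex.exp_add]
    congr 1
    push_cast
    ring
  have hP1 : P τ (Complex.exp (2 * (Real.pi : ℂ) * Complex.I * u)) = 0 ↔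
      ∃ (s : ℕ) (k : ℤ), u = k - (s+1) * τ := by
    rw [P_zero_iff hq]
    constructor
    · rintro ⟨s, hs⟩
      rw [hfac s u, exp_two_pi_eq_one_iff] at hs
      obtain ⟨k, hk⟩ := hs
      exact ⟨s, k, by linear_combination hk⟩
    · rintro ⟨s, k, hk⟩
      refine ⟨s, ?_⟩
      rw [hfac s u, exp_two_pi_eq_one_iff]
      exact ⟨k, by rw [hk]; ring⟩
  have hP2 : P τ (Complex.exp (-(2 * (Real.pi : ℂ) * Complex.I * u))) = 0 ↔
      ∃ (s : ℕ) (k : ℤ), u = -k + (s+1) * τ := by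
    rw [P_zero_iff hq]
    constructor
    · rintro ⟨s, hs⟩
      rw [show -(2 * (Real.pi : ℂ) * Complex.I * u) = 2 * (Real.pi : ℂ) * Complex.I * (-u) by ring,
        hfac s (-u), exp_two_pi_eq_one_iff] at hs
      obtain ⟨k, hk⟩ := hs
      exact ⟨s, k, by linear_combination -hk⟩
    · rintro ⟨s, k, hk⟩
      refine ⟨s, ?_⟩
      rw [show -(2 * (Real.pi : ℂ) * Complex.I * u) = 2 * (Real.pi : ℂ) * Complex.I * (-u) by ring,
        hfac s (-u), exp_two_pi_eq_one_iff]
      exact ⟨k, by rw [hk]; ring⟩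
  rw [hS, hP1, hP2]
  constructor
  · rintro ((⟨k, hk⟩ | ⟨s, k, hk⟩) | ⟨s, k, hk⟩)
    · exact ⟨k, 0, by rw [hk]; push_cast; ring⟩
    · exact ⟨k, -(s+1), by rw [hk]; push_cast; ring⟩
    · exact ⟨-k, s+1, by rw [hk]; push_cast; ring⟩
  · rintro ⟨m, n, hmn⟩
    rcases lt_trichotomy n 0 with h | h | h
    · refine Or.inl (Or.inr ⟨(-n - 1).toNat, m, ?_⟩)
      have : ((-n - 1).toNat : ℂ) = -n - 1 := by
        have h1 : ((-n - 1).toNat : ℤ) = -n - 1 := Int.toNat_of_nonneg (by omega)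
        have h2 := congrArg (fun z : ℤ => (z : ℂ)) h1
        push_cast at h2
        exact_mod_cast h2
      rw [hmn, this]
      ring
    · exact Or.inl (Or.inl ⟨m, by rw [hmn, h]; push_cast; ring⟩)
    · refine Or.inr ⟨(n - 1).toNat, -m, ?_⟩
      have : ((n - 1).toNat : ℂ) = n - 1 := by
        have h1 : ((n - 1).toNat : ℤ) = n - 1 := Int.toNat_of_nonneg (by omega)
        have h2 := congrArg (fun z : ℤ => (z : ℂ)) h1
        push_cast at h2
        exact_mod_cast h2
      rw [hmn, this]
      push_cast
      ring

end EllProof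

namespace EllProof
open Filter Topology Metric

variable {τ : ℂ}

def Lat (τ : ℂ) : Set ℂ := {z : ℂ | ∃ m n : ℤ, z = m + n * τ}

lemma lat_countable : (Lat τ).Countable := by
  have : Lat τ = Set.range (fun p : ℤ × ℤ => (p.1 : ℂ) + p.2 * τ) := by
    ext z
    constructor
    · rintro ⟨m, n, rfl⟩; exact ⟨(m, n), rfl⟩
    · rintro ⟨⟨m, n⟩, rfl⟩; exact ⟨m, n, rfl⟩
  rw [this]
  exact Set.countable_range _

lemma theta_zero_iff' (hτ : 0 < τ.im) (u : ℂ) : ellTheta τ u = 0 ↔ u ∈ Lat τ :=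
  theta_zero_iff hτ u

lemma theta_ne_zero (hτ : 0 < τ.im) {u : ℂ} (h : u ∉ Lat τ) : ellTheta τ u ≠ 0 :=
  fun hc => h ((theta_zero_iff' hτ u).mp hc)

lemma lat_inter_finite (hτ : 0 < τ.im) (c : ℂ) (R : ℝ) :
    (Lat τ ∩ Metric.closedBall c R).Finite := by
  rcases lt_or_ge R 0 with hR | hR
  · rw [Metric.closedBall_eq_empty.2 hR, Set.inter_empty]; exact Set.finite_empty
  set K1 : ℝ := (|c.im| + R) / τ.im with hK1
  have hK1nn : 0 ≤ K1 := div_nonneg (by positivity) hτ.le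
  set K2 : ℝ := |c.re| + R + K1 * |τ.re| with hK2
  apply Set.Finite.subset (Set.Finite.image (f := fun p : ℤ × ℤ => (p.1 : ℂ) + p.2 * τ)
    ((Set.finite_Icc (-⌈K2⌉) ⌈K2⌉).prod (Set.finite_Icc (-⌈K1⌉) ⌈K1⌉)))
  rintro z ⟨⟨m, n, rfl⟩, hball⟩
  have hdist : ‖(↑m + ↑n * τ) - c‖ ≤ R := by
    rwa [Metric.mem_closedBall, Complex.dist_eq] at hball
  have him : |((↑m + ↑n * τ) - c).im| ≤ R := (Complex.abs_im_le_norm _).trans hdist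
  have hre : |((↑m + ↑n * τ) - c).re| ≤ R := (Complex.abs_re_le_norm _).trans hdist
  have him' : ((↑m + ↑n * τ : ℂ) - c).im = n * τ.im - c.im := by
    simp [Complex.add_im, Complex.sub_im, Complex.mul_im]
  have hre' : ((↑m + ↑n * τ : ℂ) - c).re = m + n * τ.re - c.re := by
    simp [Complex.add_re, Complex.sub_re, Complex.mul_re]
  have hn : |(n : ℝ)| ≤ K1 := by
    rw [hK1, le_div_iff₀ hτ]
    have h1 : |(n : ℝ) * τ.im| ≤ |c.im| + R := by
      have : (n : ℝ) * τ.im = (((↑m + ↑n * τ : ℂ) - c).im) + c.im := by rw [him']; ring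
      rw [this]
      calc |((↑m + ↑n * τ : ℂ) - c).im + c.im| ≤ |((↑m + ↑n * τ : ℂ) - c).im| + |c.im| :=
            abs_add_le _ _
        _ ≤ |c.im| + R := by linarith
    calc |(n:ℝ)| * τ.im = |(n:ℝ) * τ.im| := by
          rw [abs_mul, abs_of_pos hτ]
      _ ≤ |c.im| + R := h1
  have hm : |(m : ℝ)| ≤ K2 := by
    have h1 : (m : ℝ) = (((↑m + ↑n * τ : ℂ) - c).re) + c.re - n * τ.re := by rw [hre']; ring
    rw [h1, hK2]
    have h2 : |(n:ℝ) * τ.re| ≤ K1 * |τ.re| := by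
      rw [abs_mul]
      exact mul_le_mul_of_nonneg_right hn (abs_nonneg _)
    calc |((↑m + ↑n * τ : ℂ) - c).re + c.re - (n:ℝ) * τ.re| ≤
          |((↑m + ↑n * τ : ℂ) - c).re| + |c.re| + |(n:ℝ) * τ.re| := by
            have := abs_add_le (((↑m + ↑n * τ : ℂ) - c).re + c.re) (-((n:ℝ) * τ.re))
            have h3 := abs_add_le (((↑m + ↑n * τ : ℂ) - c).re) c.re
            rw [abs_neg] at this
            calc |((↑m + ↑n * τ : ℂ) - c).re + c.re - (n:ℝ) * τ.re|
                = |(((↑m + ↑n * τ : ℂ) - c).re + c.re) + -((n:ℝ) * τ.re)| := by ring_nf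
              _ ≤ |((↑m + ↑n * τ : ℂ) - c).re + c.re| + |(n:ℝ) * τ.re| := this
              _ ≤ |((↑m + ↑n * τ : ℂ) - c).re| + |c.re| + |(n:ℝ) * τ.re| := by linarith
      _ ≤ |c.re| + R + K1 * |τ.re| := by linarith
  refine ⟨(m, n), ⟨?_, ?_⟩, rfl⟩
  · have hceil : ((⌈K2⌉ : ℤ) : ℝ) ≥ K2 := Int.le_ceil K2
    have hle : |(m:ℝ)| ≤ ((⌈K2⌉:ℤ):ℝ) := hm.trans hceil
    rw [← Int.cast_abs] at hle
    have hle' : |m| ≤ ⌈K2⌉ := by exact_mod_cast hle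
    simp only [Set.mem_Icc]
    exact ⟨neg_le_of_abs_le hle', le_of_abs_le hle'⟩
  · have hceil : ((⌈K1⌉ : ℤ) : ℝ) ≥ K1 := Int.le_ceil K1
    have hle : |(n:ℝ)| ≤ ((⌈K1⌉:ℤ):ℝ) := hn.trans hceil
    rw [← Int.cast_abs] at hle
    have hle' : |n| ≤ ⌈K1⌉ := by exact_mod_cast hle
    simp only [Set.mem_Icc]
    exact ⟨neg_le_of_abs_le hle', le_of_abs_le hle'⟩

lemma exists_eps_of_finite {F : Set ℂ} (hF : F.Finite) (z₀ : ℂ) :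
    ∃ ε > 0, ∀ w ∈ F, dist w z₀ < ε → w = z₀ := by
  classical
  set s := (hF.toFinset.erase z₀).image (fun w => dist w z₀) with hs
  rcases Finset.eq_empty_or_nonempty s with h | h
  · refine ⟨1, one_pos, fun w hw hd => ?_⟩
    by_contra hne
    have : dist w z₀ ∈ s := Finset.mem_image_of_mem _
      (Finset.mem_erase.2 ⟨hne, hF.mem_toFinset.2 hw⟩)
    rw [h] at this
    exact absurd this (Finset.notMem_empty _)
  · refine ⟨s.min' h, ?_, fun w hw hd => ?_⟩
    · obtain ⟨w, hw, hweq⟩ := Finset.mem_image.1 (s.min'_mem h)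
      rw [← hweq]
      exact dist_pos.2 (Finset.mem_erase.1 hw).1
    · by_contra hne
      have hmem : dist w z₀ ∈ s := Finset.mem_image_of_mem _
        (Finset.mem_erase.2 ⟨hne, hF.mem_toFinset.2 hw⟩)
      exact absurd hd (not_lt.2 (s.min'_le _ hmem))

/-- isolation of the zero set `{u | u+v ∈ Λ ∨ u-v ∈ Λ}` around any point. -/
lemma lat_isolation (hτ : 0 < τ.im) (v z₀ : ℂ) :
    ∃ ε > 0, ∀ u : ℂ, dist u z₀ < ε → u ≠ z₀ → u + v ∉ Lat τ ∧ u - v ∉ Lat τ := by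
  have h1 : ((fun u : ℂ => u + v) ⁻¹' Lat τ ∩ Metric.closedBall z₀ 1).Finite := by
    have : (fun u : ℂ => u + v) ⁻¹' Lat τ ∩ Metric.closedBall z₀ 1 ⊆
        (fun z : ℂ => z - v) '' (Lat τ ∩ Metric.closedBall (z₀ + v) 1) := by
      rintro u ⟨hu, hball⟩
      refine ⟨u + v, ⟨hu, ?_⟩, by ring⟩
      rw [Metric.mem_closedBall] at hball ⊢
      calc dist (u + v) (z₀ + v) = dist u z₀ := by
            rw [Complex.dist_eq, Complex.dist_eq]; ring_nf
        _ ≤ 1 := hball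
    exact Set.Finite.subset ((lat_inter_finite hτ _ _).image _) this
  have h2 : ((fun u : ℂ => u - v) ⁻¹' Lat τ ∩ Metric.closedBall z₀ 1).Finite := by
    have : (fun u : ℂ => u - v) ⁻¹' Lat τ ∩ Metric.closedBall z₀ 1 ⊆
        (fun z : ℂ => z + v) '' (Lat τ ∩ Metric.closedBall (z₀ - v) 1) := by
      rintro u ⟨hu, hball⟩
      refine ⟨u - v, ⟨hu, ?_⟩, by ring⟩
      rw [Metric.mem_closedBall] at hball ⊢
      calc dist (u - v) (z₀ - v) = dist u z₀ := by
            rw [Complex.dist_eq, Complex.dist_eq]; ring_nf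
        _ ≤ 1 := hball
    exact Set.Finite.subset ((lat_inter_finite hτ _ _).image _) this
  obtain ⟨ε, hε, hεP⟩ := exists_eps_of_finite (h1.union h2) z₀
  refine ⟨min ε 1, lt_min hε one_pos, fun u hd hne => ?_⟩
  constructor
  · intro hmem
    exact hne (hεP u (Or.inl ⟨hmem, Metric.mem_closedBall.2 (le_of_lt (lt_of_lt_of_le hd
      (min_le_right _ _)))⟩) (lt_of_lt_of_le hd (min_le_left _ _)))
  · intro hmem
    exact hne (hεP u (Or.inr ⟨hmem, Metric.mem_closedBall.2 (le_of_lt (lt_of_lt_of_le hd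
      (min_le_right _ _)))⟩) (lt_of_lt_of_le hd (min_le_left _ _)))

end EllProof

namespace EllProof
open Filter Topology Metric

variable {τ : ℂ}

lemma lat_one : (1 : ℂ) ∈ Lat τ := ⟨1, 0, by push_cast; ring⟩
lemma lat_tau : τ ∈ Lat τ := ⟨0, 1, by push_cast; ring⟩
lemma lat_zero : (0 : ℂ) ∈ Lat τ := ⟨0, 0, by push_cast; ring⟩

lemma lat_sub {z w : ℂ} (hz : z ∈ Lat τ) (hw : w ∈ Lat τ) : z - w ∈ Lat τ := by
  obtain ⟨m, n, rfl⟩ := hz; obtain ⟨m', n', rfl⟩ := hw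
  exact ⟨m - m', n - n', by push_cast; ring⟩

lemma lat_add {z w : ℂ} (hz : z ∈ Lat τ) (hw : w ∈ Lat τ) : z + w ∈ Lat τ := by
  obtain ⟨m, n, rfl⟩ := hz; obtain ⟨m', n', rfl⟩ := hw
  exact ⟨m + m', n + n', by push_cast; ring⟩

/-- multiplier for the τ-shift of θ -/
def cmul (τ u : ℂ) : ℂ :=
  -Complex.exp (-((Real.pi : ℂ) * Complex.I * τ)) * Complex.exp (-(2 * (Real.pi : ℂ) * Complex.I * u))

lemma cmul_ne_zero (u : ℂ) : cmul τ u ≠ 0 := by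
  simp [cmul, Complex.exp_ne_zero]

lemma cmul_differentiable : Differentiable ℂ (cmul τ) := by
  apply Differentiable.mul (differentiable_const _)
  exact ((differentiable_id.const_mul _).neg).cexp

lemma theta_quasi' (hτ : 0 < τ.im) (u : ℂ) : ellTheta τ (u + τ) = cmul τ u * ellTheta τ u :=
  theta_quasi hτ u

/-- translation invariance of zero/nonzero properties along the lattice for functions with
periods 1 and quasi-period τ is handled ad hoc below. -/
lemma theta_deriv_lattice (hτ : 0 < τ.im) (z : ℂ) (hz : z ∈ Lat τ) :
    deriv (ellTheta τ) (z + τ) = cmul τ z * deriv (ellTheta τ) z := by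
  have hth := theta_differentiable hτ
  have h1 : (fun u => ellTheta τ (u + τ)) = fun u => cmul τ u * ellTheta τ u :=
    funext (theta_quasi' hτ)
  have h2 : deriv (fun u => ellTheta τ (u + τ)) z = deriv (ellTheta τ) (z + τ) :=
    deriv_comp_add_const _ _ _
  rw [h1] at h2
  rw [← h2, deriv_fun_mul (cmul_differentiable z) (hth z)]
  rw [(theta_zero_iff' hτ z).mpr hz]
  ring

lemma theta_deriv_ne_zero_zero (hτ : 0 < τ.im) : deriv (ellTheta τ) 0 ≠ 0 := by
  have hq := norm_q_lt_one hτ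
  -- θ = S * W  with W = product of the two P's
  set W : ℂ → ℂ := fun u => P τ (Complex.exp (2 * (Real.pi : ℂ) * Complex.I * u)) *
    P τ (Complex.exp (-(2 * (Real.pi : ℂ) * Complex.I * u))) with hW
  set S : ℂ → ℂ := fun u => Complex.exp ((Real.pi : ℂ) * Complex.I * u) -
    Complex.exp (-((Real.pi : ℂ) * Complex.I * u)) with hS
  have hdecomp : ellTheta τ = fun u => S u * W u := by
    funext u
    rw [theta_eq]
    ring
  have hWdiff : Differentiable ℂ W :=
    ((P_differentiable hq).comp ((differentiable_id.const_mul _).cexp)).mul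
      ((P_differentiable hq).comp (((differentiable_id.const_mul _).neg).cexp))
  have hSderiv : HasDerivAt S (2 * (Real.pi : ℂ) * Complex.I) 0 := by
    have h1 : HasDerivAt (fun u : ℂ => Complex.exp ((Real.pi : ℂ) * Complex.I * u))
        ((Real.pi : ℂ) * Complex.I * Complex.exp ((Real.pi : ℂ) * Complex.I * 0)) 0 := by
      have := ((hasDerivAt_id (0:ℂ)).const_mul ((Real.pi : ℂ) * Complex.I)).cexp
      simpa [mul_comm] using this
    have h2 : HasDerivAt (fun u : ℂ => Complex.exp (-((Real.pi : ℂ) * Complex.I * u)))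
        (-((Real.pi : ℂ) * Complex.I) * Complex.exp (-((Real.pi : ℂ) * Complex.I * 0))) 0 := by
      have := (((hasDerivAt_id (0:ℂ)).const_mul ((Real.pi : ℂ) * Complex.I)).neg).cexp
      simpa [mul_comm] using this
    have := h1.fun_sub h2
    simpa using this.congr_deriv (by simp; ring)
  have hS0 : S 0 = 0 := by simp [hS]
  have hW0 : W 0 ≠ 0 := by
    have hone : Complex.exp (2 * (Real.pi : ℂ) * Complex.I * 0) = 1 := by simp
    have hone' : Complex.exp (-(2 * (Real.pi : ℂ) * Complex.I * 0)) = 1 := by simp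
    have hfac : ∀ s : ℕ, 1 - q τ ^ (s + 1) * (1 : ℂ) ≠ 0 := by
      intro s
      apply factor_ne_zero_of_norm
      rw [mul_one, norm_pow]
      exact pow_lt_one₀ (norm_nonneg _) hq (by omega)
    show P τ (Complex.exp (2 * (Real.pi : ℂ) * Complex.I * 0)) *
      P τ (Complex.exp (-(2 * (Real.pi : ℂ) * Complex.I * 0))) ≠ 0
    rw [hone, hone']
    exact mul_ne_zero (P_ne_zero hq 1 hfac) (P_ne_zero hq 1 hfac)
  have hder : deriv (ellTheta τ) 0 = 2 * (Real.pi : ℂ) * Complex.I * W 0 := by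
    rw [hdecomp]
    rw [deriv_fun_mul (hSderiv.differentiableAt) (hWdiff 0), hSderiv.deriv, hS0]
    ring
  rw [hder]
  apply mul_ne_zero _ hW0
  simp [Real.pi_ne_zero, Complex.I_ne_zero]

lemma step_iterate {P : ℂ → Prop} {c : ℂ} (h : ∀ z, P z ↔ P (z + c)) :
    ∀ (n : ℤ) (z : ℂ), P z ↔ P (z + n * c) := by
  intro n
  induction n using Int.induction_on with
  | zero => intro z; simp
  | succ k ih =>
    intro z
    push_cast
    push_cast at ih
    have hw := h (z + (k : ℂ) * c)
    rw [show z + (k : ℂ) * c + c = z + ((k : ℂ) + 1) * c by ring] at hw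
    exact (ih z).trans hw
  | pred k ih =>
    intro z
    push_cast
    push_cast at ih
    have hw := h (z + (-(k : ℂ) - 1) * c)
    rw [show z + (-(k : ℂ) - 1) * c + c = z + -(k : ℂ) * c by ring] at hw
    exact (ih z).trans hw.symm

lemma lat_transport {P : ℂ → Prop} (h1 : ∀ z, P z ↔ P (z + 1)) (h2 : ∀ z, P z ↔ P (z + τ))
    {z w : ℂ} (hw : w ∈ Lat τ) (hz : P z) : P (z + w) := by
  obtain ⟨m, n, rfl⟩ := hw
  have s1 := (step_iterate h1 m z).mp hz
  have s2 := (step_iterate h2 n (z + (m : ℂ) * 1)).mp s1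
  rw [show z + ((m : ℂ) + (n : ℂ) * τ) = z + (m : ℂ) * 1 + (n : ℂ) * τ by ring]
  exact s2

lemma theta_deriv_ne_zero (hτ : 0 < τ.im) {z : ℂ} (hz : z ∈ Lat τ) :
    deriv (ellTheta τ) z ≠ 0 := by
  have hth := theta_differentiable hτ
  set Q : ℂ → Prop := fun z => ellTheta τ z = 0 ∧ deriv (ellTheta τ) z ≠ 0 with hQ
  have h1 : ∀ w : ℂ, Q w ↔ Q (w + 1) := by
    intro w
    have hder : deriv (ellTheta τ) (w + 1) = -deriv (ellTheta τ) w := by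
      have hfe : (fun u => ellTheta τ (u + 1)) = fun u => -ellTheta τ u :=
        funext (theta_periodic τ)
      have h2 : deriv (fun u => ellTheta τ (u + 1)) w = deriv (ellTheta τ) (w + 1) :=
        deriv_comp_add_const _ _ _
      rw [hfe, deriv.fun_neg] at h2
      exact h2.symm
    rw [hQ]
    simp only [theta_periodic τ w, hder, neg_eq_zero, neg_ne_zero]
  have h2 : ∀ w : ℂ, Q w ↔ Q (w + τ) := by
    intro w
    have hder : deriv (ellTheta τ) (w + τ) =
        deriv (cmul τ) w * ellTheta τ w + cmul τ w * deriv (ellTheta τ) w := by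
      have hfe : (fun u => ellTheta τ (u + τ)) = fun u => cmul τ u * ellTheta τ u :=
        funext (theta_quasi' hτ)
      have hcd : deriv (fun u => ellTheta τ (u + τ)) w = deriv (ellTheta τ) (w + τ) :=
        deriv_comp_add_const _ _ _
      rw [hfe] at hcd
      rw [← hcd, deriv_fun_mul (cmul_differentiable w) (hth w)]
    rw [hQ]
    simp only [theta_quasi' hτ w, hder]
    constructor
    · rintro ⟨hz0, hd0⟩
      refine ⟨by rw [hz0, mul_zero], ?_⟩
      rw [hz0]
      simpa using mul_ne_zero (cmul_ne_zero w) hd0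
    · rintro ⟨hz0, hd0⟩
      have hz0' : ellTheta τ w = 0 := by
        rcases mul_eq_zero.1 hz0 with h | h
        · exact absurd h (cmul_ne_zero w)
        · exact h
      refine ⟨hz0', ?_⟩
      rw [hz0'] at hd0
      simp only [mul_zero, zero_add] at hd0
      exact fun hc => hd0 (by rw [hc, mul_zero])
  have hQ0 : Q 0 := ⟨theta_zero τ, theta_deriv_ne_zero_zero hτ⟩
  have := lat_transport h1 h2 hz hQ0
  rw [zero_add] at this
  exact this.2

end EllProof

namespace EllProof
open Filter Topology Metric

variable {τ : ℂ}

def GW (τ a b v u : ℂ) : ℂ :=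
  ellTheta τ (u+a) * ellTheta τ (u-a) * (ellTheta τ (v+b) * ellTheta τ (v-b))
  - ellTheta τ (u+b) * ellTheta τ (u-b) * (ellTheta τ (v+a) * ellTheta τ (v-a))
  - ellTheta τ (a+b) * ellTheta τ (a-b) * (ellTheta τ (u+v) * ellTheta τ (u-v))

def Tv (τ v u : ℂ) : ℂ := ellTheta τ (u+v) * ellTheta τ (u-v)

def mu (τ u : ℂ) : ℂ :=
  Complex.exp (-((Real.pi : ℂ) * Complex.I * τ)) ^ 2 *
    Complex.exp (-(4 * (Real.pi : ℂ) * Complex.I * u))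

lemma mu_ne_zero (u : ℂ) : mu τ u ≠ 0 :=
  mul_ne_zero (pow_ne_zero _ (Complex.exp_ne_zero _)) (Complex.exp_ne_zero _)

lemma mu_differentiable : Differentiable ℂ (mu τ) :=
  (differentiable_const _).mul (((differentiable_id.const_mul _).neg).cexp)

lemma cmul_mul (u w : ℂ) : cmul τ (u+w) * cmul τ (u-w) = mu τ u := by
  have h : Complex.exp (-(2*(Real.pi:ℂ)*Complex.I*(u+w))) *
      Complex.exp (-(2*(Real.pi:ℂ)*Complex.I*(u-w))) =
      Complex.exp (-(4*(Real.pi:ℂ)*Complex.I*u)) := by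
    rw [← Complex.exp_add]; congr 1; ring
  simp only [cmul, mu]
  rw [← h]
  ring

lemma tpair_shift (hτ : 0 < τ.im) (w u : ℂ) :
    ellTheta τ ((u+τ)+w) * ellTheta τ ((u+τ)-w) =
      mu τ u * (ellTheta τ (u+w) * ellTheta τ (u-w)) := by
  rw [show (u+τ)+w = (u+w)+τ by ring, show (u+τ)-w = (u-w)+τ by ring,
    theta_quasi' hτ, theta_quasi' hτ, ← cmul_mul (τ := τ) u w]
  ring

lemma tpair_one (w u : ℂ) :
    ellTheta τ ((u+1)+w) * ellTheta τ ((u+1)-w) = ellTheta τ (u+w) * ellTheta τ (u-w) := by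
  rw [show (u+1)+w = (u+w)+1 by ring, show (u+1)-w = (u-w)+1 by ring,
    theta_periodic, theta_periodic]
  ring

lemma tpair_even (w u : ℂ) :
    ellTheta τ ((-u)+w) * ellTheta τ ((-u)-w) = ellTheta τ (u+w) * ellTheta τ (u-w) := by
  rw [show (-u)+w = -(u-w) by ring, show (-u)-w = -(u+w) by ring, theta_odd, theta_odd]
  ring

lemma theta_aff_diff_add (hτ : 0 < τ.im) (c : ℂ) :
    Differentiable ℂ (fun u : ℂ => ellTheta τ (u + c)) :=
  (theta_differentiable hτ).comp (differentiable_id.add_const c)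

lemma theta_aff_diff_sub (hτ : 0 < τ.im) (c : ℂ) :
    Differentiable ℂ (fun u : ℂ => ellTheta τ (u - c)) :=
  (theta_differentiable hτ).comp (differentiable_id.sub_const c)

lemma G_diff (hτ : 0 < τ.im) (a b v : ℂ) : Differentiable ℂ (GW τ a b v) := by
  unfold GW
  exact ((((theta_aff_diff_add hτ a).mul (theta_aff_diff_sub hτ a)).mul
      (differentiable_const _)).sub
    (((theta_aff_diff_add hτ b).mul (theta_aff_diff_sub hτ b)).mul
      (differentiable_const _))).sub
    ((differentiable_const _).mul
      ((theta_aff_diff_add hτ v).mul (theta_aff_diff_sub hτ v)))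

lemma Tv_diff (hτ : 0 < τ.im) (v : ℂ) : Differentiable ℂ (Tv τ v) := by
  unfold Tv
  exact (theta_aff_diff_add hτ v).mul (theta_aff_diff_sub hτ v)

lemma G_per1 (a b v u : ℂ) : GW τ a b v (u+1) = GW τ a b v u := by
  unfold GW
  rw [tpair_one a u, tpair_one b u, tpair_one v u]

lemma G_quasi (hτ : 0 < τ.im) (a b v u : ℂ) : GW τ a b v (u+τ) = mu τ u * GW τ a b v u := by
  unfold GW
  rw [tpair_shift hτ a u, tpair_shift hτ b u, tpair_shift hτ v u]
  ring

lemma G_even (a b v u : ℂ) : GW τ a b v (-u) = GW τ a b v u := by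
  unfold GW
  rw [tpair_even a u, tpair_even b u, tpair_even v u]

lemma Tv_per1 (v u : ℂ) : Tv τ v (u+1) = Tv τ v u := tpair_one v u

lemma Tv_quasi (hτ : 0 < τ.im) (v u : ℂ) : Tv τ v (u+τ) = mu τ u * Tv τ v u :=
  tpair_shift hτ v u

lemma Tv_zero_iff (hτ : 0 < τ.im) (v u : ℂ) :
    Tv τ v u = 0 ↔ (u+v ∈ Lat τ ∨ u-v ∈ Lat τ) := by
  rw [Tv, mul_eq_zero, theta_zero_iff' hτ, theta_zero_iff' hτ]

lemma G_at_a (a b v : ℂ) : GW τ a b v a = 0 := by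
  have h1 : ellTheta τ (v - a) = -ellTheta τ (a - v) := by
    rw [show v - a = -(a-v) by ring, theta_odd]
  have h2 : v + a = a + v := by ring
  simp only [GW, sub_self, theta_zero τ, mul_zero, zero_mul, zero_sub]
  rw [h1, h2]
  ring

lemma G_at_v (a b v : ℂ) : GW τ a b v v = 0 := by
  simp only [GW, sub_self, theta_zero τ, mul_zero, zero_mul]
  ring

lemma G_zero_of_Tv_zero (hτ : 0 < τ.im) (a b v : ℂ) {u : ℂ}
    (h : u + v ∈ Lat τ ∨ u - v ∈ Lat τ) : GW τ a b v u = 0 := by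
  have h1 : ∀ z : ℂ, (GW τ a b v z = 0) ↔ (GW τ a b v (z+1) = 0) := by
    intro z; rw [G_per1]
  have h2 : ∀ z : ℂ, (GW τ a b v z = 0) ↔ (GW τ a b v (z+τ) = 0) := by
    intro z
    rw [G_quasi hτ, mul_eq_zero]
    constructor
    · exact Or.inr
    · rintro (hc | hc)
      · exact absurd hc (mu_ne_zero z)
      · exact hc
  rcases h with h | h
  · have : GW τ a b v ((-v) + (u + v)) = 0 := by
      apply lat_transport h1 h2 h
      rw [show -v = -(v : ℂ) by ring, G_even]
      exact G_at_v a b v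
    rwa [show (-v) + (u + v) = u by ring] at this
  · have : GW τ a b v (v + (u - v)) = 0 := by
      apply lat_transport h1 h2 h
      exact G_at_v a b v
    rwa [show v + (u - v) = u by ring] at this

lemma Tv_deriv_ne (hτ : 0 < τ.im) {v : ℂ} (h2v : 2*v ∉ Lat τ) {u : ℂ}
    (hu : Tv τ v u = 0) : deriv (Tv τ v) u ≠ 0 := by
  have hth := theta_differentiable hτ
  have hder : deriv (Tv τ v) u =
      deriv (ellTheta τ) (u+v) * ellTheta τ (u-v) +
      ellTheta τ (u+v) * deriv (ellTheta τ) (u-v) := by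
    have : Tv τ v = fun u => (fun x => ellTheta τ (x + v)) u * (fun x => ellTheta τ (x - v)) u :=
      rfl
    rw [this, deriv_fun_mul ((theta_aff_diff_add hτ v) u) ((theta_aff_diff_sub hτ v) u),
      deriv_comp_add_const, deriv_comp_sub_const]
  rcases (Tv_zero_iff hτ v u).1 hu with h | h
  · have hz1 : ellTheta τ (u+v) = 0 := (theta_zero_iff' hτ _).2 h
    have hz2 : ellTheta τ (u-v) ≠ 0 := by
      apply theta_ne_zero hτ
      intro hc
      exact h2v (by
        have := lat_sub h hc
        rwa [show u + v - (u - v) = 2*v by ring] at this)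
    rw [hder, hz1, zero_mul, add_zero]
    exact mul_ne_zero (theta_deriv_ne_zero hτ h) hz2
  · have hz1 : ellTheta τ (u-v) = 0 := (theta_zero_iff' hτ _).2 h
    have hz2 : ellTheta τ (u+v) ≠ 0 := by
      apply theta_ne_zero hτ
      intro hc
      exact h2v (by
        have := lat_sub hc h
        rwa [show u + v - (u - v) = 2*v by ring] at this)
    rw [hder, hz1, mul_zero, zero_add]
    exact mul_ne_zero hz2 (theta_deriv_ne_zero hτ h)

end EllProof

namespace EllProof
open Filter Topology Metric

variable {τ : ℂ}

open scoped Classical in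
noncomputable def Hx (τ a b v u : ℂ) : ℂ :=
  if Tv τ v u = 0 then deriv (GW τ a b v) u / deriv (Tv τ v) u
  else GW τ a b v u / Tv τ v u

lemma Hx_differentiable (hτ : 0 < τ.im) {v : ℂ} (h2v : 2*v ∉ Lat τ) (a b : ℂ) :
    Differentiable ℂ (Hx τ a b v) := by
  intro u₀
  by_cases h0 : Tv τ v u₀ = 0
  · -- at a zero of Tv
    have hG0 : GW τ a b v u₀ = 0 := G_zero_of_Tv_zero hτ a b v ((Tv_zero_iff hτ v u₀).1 h0)
    have hd : deriv (Tv τ v) u₀ ≠ 0 := Tv_deriv_ne hτ h2v h0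
    obtain ⟨p, hp⟩ := (G_diff hτ a b v).analyticAt u₀
    obtain ⟨p', hp'⟩ := (Tv_diff hτ v).analyticAt u₀
    have dg1 : DifferentiableAt ℂ (dslope (GW τ a b v) u₀) u₀ :=
      hp.has_fpower_series_dslope_fslope.analyticAt.differentiableAt
    have dg2 : DifferentiableAt ℂ (dslope (Tv τ v) u₀) u₀ :=
      hp'.has_fpower_series_dslope_fslope.analyticAt.differentiableAt
    have hgd : DifferentiableAt ℂ
        (fun u => dslope (GW τ a b v) u₀ u / dslope (Tv τ v) u₀ u) u₀ :=
      dg1.div dg2 (by rw [dslope_same]; exact hd)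
    apply hgd.congr_of_eventuallyEq
    obtain ⟨ε, hε, hiso⟩ := lat_isolation hτ v u₀
    apply Metric.eventually_nhds_iff_ball.mpr
    refine ⟨ε, hε, fun u hu => ?_⟩
    by_cases hu0 : u = u₀
    · subst hu0
      show Hx τ a b v u = dslope (GW τ a b v) u u / dslope (Tv τ v) u u
      have hH : Hx τ a b v u = deriv (GW τ a b v) u / deriv (Tv τ v) u := if_pos h0
      rw [hH, dslope_same, dslope_same]
    · have hTu : Tv τ v u ≠ 0 := by
        rw [Ne, Tv_zero_iff hτ v u]
        have := hiso u (by rwa [Metric.mem_ball] at hu) hu0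
        rintro (hc | hc)
        · exact this.1 hc
        · exact this.2 hc
      show Hx τ a b v u = dslope (GW τ a b v) u₀ u / dslope (Tv τ v) u₀ u
      have hH : Hx τ a b v u = GW τ a b v u / Tv τ v u := if_neg hTu
      rw [hH, dslope_of_ne _ hu0, dslope_of_ne _ hu0, slope, slope, vsub_eq_sub, vsub_eq_sub,
        hG0, h0, sub_zero, sub_zero, smul_eq_mul, smul_eq_mul,
        mul_div_mul_left _ _ (inv_ne_zero (sub_ne_zero.2 hu0))]
  · have hne : ∀ᶠ u in 𝓝 u₀, Tv τ v u ≠ 0 :=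
      ((Tv_diff hτ v) u₀).continuousAt.eventually_ne h0
    have heq : Hx τ a b v =ᶠ[𝓝 u₀] fun u => GW τ a b v u / Tv τ v u := by
      filter_upwards [hne] with u hu
      exact if_neg hu
    exact (((G_diff hτ a b v) u₀).div ((Tv_diff hτ v) u₀) h0).congr_of_eventuallyEq heq

end EllProof

namespace EllProof
open Filter Topology Metric

variable {τ : ℂ}

lemma Hx_per1 (hτ : 0 < τ.im) (a b v u : ℂ) : Hx τ a b v (u+1) = Hx τ a b v u := by
  have hT : Tv τ v (u+1) = Tv τ v u := Tv_per1 v u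
  have hdG : deriv (GW τ a b v) (u+1) = deriv (GW τ a b v) u := by
    have h1 : (fun x => GW τ a b v (x + 1)) = GW τ a b v := funext (fun x => G_per1 a b v x)
    have h2 : deriv (fun x => GW τ a b v (x + 1)) u = deriv (GW τ a b v) (u+1) :=
      deriv_comp_add_const _ _ _
    rw [h1] at h2
    exact h2.symm
  have hdT : deriv (Tv τ v) (u+1) = deriv (Tv τ v) u := by
    have h1 : (fun x => Tv τ v (x + 1)) = Tv τ v := funext (fun x => Tv_per1 v x)
    have h2 : deriv (fun x => Tv τ v (x + 1)) u = deriv (Tv τ v) (u+1) :=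
      deriv_comp_add_const _ _ _
    rw [h1] at h2
    exact h2.symm
  by_cases h0 : Tv τ v u = 0
  · have hA : Hx τ a b v (u+1) = deriv (GW τ a b v) (u+1) / deriv (Tv τ v) (u+1) :=
      if_pos (by rw [hT]; exact h0)
    have hB : Hx τ a b v u = deriv (GW τ a b v) u / deriv (Tv τ v) u := if_pos h0
    rw [hA, hB, hdG, hdT]
  · have hA : Hx τ a b v (u+1) = GW τ a b v (u+1) / Tv τ v (u+1) :=
      if_neg (by rw [hT]; exact h0)
    have hB : Hx τ a b v u = GW τ a b v u / Tv τ v u := if_neg h0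
    rw [hA, hB, hT, G_per1]

lemma Hx_pertau (hτ : 0 < τ.im) (a b v u : ℂ) : Hx τ a b v (u+τ) = Hx τ a b v u := by
  have hT : Tv τ v (u+τ) = mu τ u * Tv τ v u := Tv_quasi hτ v u
  by_cases h0 : Tv τ v u = 0
  · have hG0 : GW τ a b v u = 0 := G_zero_of_Tv_zero hτ a b v ((Tv_zero_iff hτ v u).1 h0)
    have hdG : deriv (GW τ a b v) (u+τ) = mu τ u * deriv (GW τ a b v) u := by
      have h1 : (fun x => GW τ a b v (x + τ)) = fun x => mu τ x * GW τ a b v x :=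
        funext (fun x => G_quasi hτ a b v x)
      have h2 : deriv (fun x => GW τ a b v (x + τ)) u = deriv (GW τ a b v) (u+τ) :=
        deriv_comp_add_const _ _ _
      rw [h1, deriv_fun_mul (mu_differentiable u) (G_diff hτ a b v u), hG0] at h2
      rw [← h2]
      ring
    have hdT : deriv (Tv τ v) (u+τ) = mu τ u * deriv (Tv τ v) u := by
      have h1 : (fun x => Tv τ v (x + τ)) = fun x => mu τ x * Tv τ v x :=
        funext (fun x => Tv_quasi hτ v x)
      have h2 : deriv (fun x => Tv τ v (x + τ)) u = deriv (Tv τ v) (u+τ) :=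
        deriv_comp_add_const _ _ _
      rw [h1, deriv_fun_mul (mu_differentiable u) (Tv_diff hτ v u), h0] at h2
      rw [← h2]
      ring
    have hA : Hx τ a b v (u+τ) = deriv (GW τ a b v) (u+τ) / deriv (Tv τ v) (u+τ) :=
      if_pos (by rw [hT, h0, mul_zero])
    have hB : Hx τ a b v u = deriv (GW τ a b v) u / deriv (Tv τ v) u := if_pos h0
    rw [hA, hB, hdG, hdT, mul_div_mul_left _ _ (mu_ne_zero u)]
  · have hA : Hx τ a b v (u+τ) = GW τ a b v (u+τ) / Tv τ v (u+τ) :=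
      if_neg (by rw [hT]; exact fun hc => h0 ((mul_eq_zero.1 hc).resolve_left (mu_ne_zero u)))
    have hB : Hx τ a b v u = GW τ a b v u / Tv τ v u := if_neg h0
    rw [hA, hB, hT, G_quasi hτ, mul_div_mul_left _ _ (mu_ne_zero u)]

lemma Hx_lat (hτ : 0 < τ.im) (a b v : ℂ) {w : ℂ} (hw : w ∈ Lat τ) (u : ℂ) :
    Hx τ a b v (u + w) = Hx τ a b v u := by
  have := lat_transport (τ := τ) (P := fun z => Hx τ a b v z = Hx τ a b v u)
    (fun z => by rw [Hx_per1 hτ]) (fun z => by rw [Hx_pertau hτ]) hw rfl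
  exact this

/-- Fundamental-domain decomposition. -/
lemma fundamental (hτ : 0 < τ.im) (u : ℂ) :
    ∃ w ∈ Lat τ, ∃ s t : ℝ, s ∈ Set.Icc (0:ℝ) 1 ∧ t ∈ Set.Icc (0:ℝ) 1 ∧
      u = (s + t * τ) + w := by
  set t0 : ℝ := u.im / τ.im with ht0
  set s0 : ℝ := u.re - t0 * τ.re with hs0
  have hu : u = (s0 : ℂ) + (t0 : ℂ) * τ := by
    apply Complex.ext
    · simp [hs0, Complex.add_re, Complex.mul_re]
    · simp [hs0, ht0, Complex.add_im, Complex.mul_im]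
      field_simp
  refine ⟨(⌊s0⌋ : ℂ) + (⌊t0⌋ : ℂ) * τ, ⟨⌊s0⌋, ⌊t0⌋, rfl⟩,
    s0 - ⌊s0⌋, t0 - ⌊t0⌋, ⟨?_, ?_⟩, ⟨?_, ?_⟩, ?_⟩
  · exact sub_nonneg.2 (Int.floor_le s0)
  · exact le_of_lt (by linarith [Int.lt_floor_add_one s0])
  · exact sub_nonneg.2 (Int.floor_le t0)
  · exact le_of_lt (by linarith [Int.lt_floor_add_one t0])
  · rw [hu]
    push_cast
    ring

lemma Hx_bounded (hτ : 0 < τ.im) {v : ℂ} (h2v : 2*v ∉ Lat τ) (a b : ℂ) :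
    Bornology.IsBounded (Set.range (Hx τ a b v)) := by
  set K : Set ℂ := (fun p : ℝ × ℝ => (p.1 : ℂ) + (p.2 : ℂ) * τ) ''
    (Set.Icc (0:ℝ) 1 ×ˢ Set.Icc (0:ℝ) 1) with hK
  have hKcomp : IsCompact K := by
    apply IsCompact.image (isCompact_Icc.prod isCompact_Icc)
    continuity
  have hsub : Set.range (Hx τ a b v) ⊆ Hx τ a b v '' K := by
    rintro z ⟨u, rfl⟩
    obtain ⟨w, hw, s, t, hs, ht, hu⟩ := fundamental hτ u
    refine ⟨(s : ℂ) + (t : ℂ) * τ, ⟨(s, t), ⟨hs, ht⟩, rfl⟩, ?_⟩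
    rw [hu, Hx_lat hτ a b v hw]
  exact ((hKcomp.image ((Hx_differentiable hτ h2v a b).continuous)).isBounded).subset hsub

/-- Generic case of the Weierstrass three-term identity. -/
lemma weier_generic (hτ : 0 < τ.im) {v a : ℂ} (h2v : 2*v ∉ Lat τ)
    (hav : a + v ∉ Lat τ) (hav' : a - v ∉ Lat τ) (b u : ℂ) :
    GW τ a b v u = 0 := by
  by_cases h0 : Tv τ v u = 0
  · exact G_zero_of_Tv_zero hτ a b v ((Tv_zero_iff hτ v u).1 h0)
  · have hTa : Tv τ v a ≠ 0 := by
      rw [Ne, Tv_zero_iff hτ v a]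
      rintro (hc | hc)
      · exact hav hc
      · exact hav' hc
    have hL := (Hx_differentiable hτ h2v a b).apply_eq_apply_of_bounded
      (Hx_bounded hτ h2v a b) u a
    have hHa : Hx τ a b v a = 0 := by
      have : Hx τ a b v a = GW τ a b v a / Tv τ v a := if_neg hTa
      rw [this, G_at_a, zero_div]
    have hHu : Hx τ a b v u = GW τ a b v u / Tv τ v u := if_neg h0
    have : GW τ a b v u / Tv τ v u = 0 := by rw [← hHu, hL, hHa]
    exact (div_eq_zero_iff.1 this).resolve_right h0

end EllProof

namespace EllProof
open Filter Topology Metric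

variable {τ : ℂ}

lemma weier_all (hτ : 0 < τ.im) (a b u v : ℂ) : GW τ a b v u = 0 := by
  have hth : Continuous (ellTheta τ) := (theta_differentiable hτ).continuous
  set F : ℂ → ℂ := fun v => GW τ a b v u with hF
  have hFcont : Continuous F := by
    have h1 : ∀ c : ℂ, Continuous fun v : ℂ => ellTheta τ (v + c) :=
      fun c => hth.comp (continuous_id.add continuous_const)
    have h2 : ∀ c : ℂ, Continuous fun v : ℂ => ellTheta τ (v - c) :=
      fun c => hth.comp (continuous_id.sub continuous_const)
    have h3 : ∀ c : ℂ, Continuous fun v : ℂ => ellTheta τ (c + v) :=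
      fun c => hth.comp (continuous_const.add continuous_id)
    have h4 : ∀ c : ℂ, Continuous fun v : ℂ => ellTheta τ (c - v) :=
      fun c => hth.comp (continuous_const.sub continuous_id)
    exact ((continuous_const.mul ((h1 b).mul (h2 b))).sub
      (continuous_const.mul ((h1 a).mul (h2 a)))).sub
      (continuous_const.mul ((h3 u).mul (h4 u)))
  -- the set of bad v is countable
  set Bad : Set ℂ := ((fun z : ℂ => z/2) '' Lat τ) ∪ ((fun z : ℂ => z - a) '' Lat τ) ∪
    ((fun z : ℂ => a - z) '' Lat τ) with hBad
  have hBadc : Bad.Countable :=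
    ((lat_countable.image _).union (lat_countable.image _)).union (lat_countable.image _)
  have hdense : Dense Badᶜ := hBadc.dense_compl ℂ
  have hzero : Set.EqOn F (fun _ => 0) Badᶜ := by
    intro v hv
    simp only [hBad, Set.compl_union, Set.mem_inter_iff, Set.mem_compl_iff] at hv
    obtain ⟨⟨hv1, hv2⟩, hv3⟩ := hv
    apply weier_generic hτ
    · intro hc
      exact hv1 ⟨2*v, hc, by ring⟩
    · intro hc
      exact hv2 ⟨a + v, hc, by ring⟩
    · intro hc
      exact hv3 ⟨a - v, hc, by ring⟩
    -- b u arguments are implicit in the goal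
  have := Continuous.ext_on hdense hFcont continuous_const hzero
  exact congrFun this v

end EllProof


namespace EllProof
open Filter Topology Metric

variable {τ : ℂ}

lemma weierstrass (hτ : 0 < τ.im) (u v a b : ℂ) :
    ellTheta τ (u+a) * ellTheta τ (u-a) * (ellTheta τ (v+b) * ellTheta τ (v-b))
      - ellTheta τ (u+b) * ellTheta τ (u-b) * (ellTheta τ (v+a) * ellTheta τ (v-a))
    = ellTheta τ (a+b) * ellTheta τ (a-b) * (ellTheta τ (u+v) * ellTheta τ (u-v)) := by
  have h := weier_all hτ a b u v
  unfold GW at h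
  linear_combination h

lemma bracket (hτ : 0 < τ.im) (H x₁ x₂ y₁ y₂ A : ℂ) :
    ellTheta τ (A+y₁-x₁) * ellTheta τ (A+H+y₂-x₂) *
        (ellTheta τ (y₂-x₁) * ellTheta τ (H+y₁-x₂))
      - ellTheta τ (A+y₂-x₁) * ellTheta τ (A+H+y₁-x₂) *
        (ellTheta τ (y₁-x₁) * ellTheta τ (H+y₂-x₂))
    = ellTheta τ (x₂-x₁-H) * ellTheta τ (y₁-y₂) *
        (ellTheta τ (A+H+y₁+y₂-x₁-x₂) * ellTheta τ A) := by
  have W := weierstrass hτ (A + (H + y₁ + y₂ - x₁ - x₂)/2) ((H + y₁ + y₂ - x₁ - x₂)/2)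
    ((y₁ - y₂ - x₁ + x₂ - H)/2) ((y₂ - y₁ - x₁ + x₂ - H)/2)
  rw [show A + (H + y₁ + y₂ - x₁ - x₂)/2 + (y₁ - y₂ - x₁ + x₂ - H)/2 = A + y₁ - x₁ by ring,
    show A + (H + y₁ + y₂ - x₁ - x₂)/2 - (y₁ - y₂ - x₁ + x₂ - H)/2 = A + H + y₂ - x₂ by ring,
    show (H + y₁ + y₂ - x₁ - x₂)/2 + (y₂ - y₁ - x₁ + x₂ - H)/2 = y₂ - x₁ by ring,
    show (H + y₁ + y₂ - x₁ - x₂)/2 - (y₂ - y₁ - x₁ + x₂ - H)/2 = H + y₁ - x₂ by ring,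
    show A + (H + y₁ + y₂ - x₁ - x₂)/2 + (y₂ - y₁ - x₁ + x₂ - H)/2 = A + y₂ - x₁ by ring,
    show A + (H + y₁ + y₂ - x₁ - x₂)/2 - (y₂ - y₁ - x₁ + x₂ - H)/2 = A + H + y₁ - x₂ by ring,
    show (H + y₁ + y₂ - x₁ - x₂)/2 + (y₁ - y₂ - x₁ + x₂ - H)/2 = y₁ - x₁ by ring,
    show (H + y₁ + y₂ - x₁ - x₂)/2 - (y₁ - y₂ - x₁ + x₂ - H)/2 = H + y₂ - x₂ by ring,
    show (y₁ - y₂ - x₁ + x₂ - H)/2 + (y₂ - y₁ - x₁ + x₂ - H)/2 = x₂ - x₁ - H by ring,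
    show (y₁ - y₂ - x₁ + x₂ - H)/2 - (y₂ - y₁ - x₁ + x₂ - H)/2 = y₁ - y₂ by ring,
    show A + (H + y₁ + y₂ - x₁ - x₂)/2 + (H + y₁ + y₂ - x₁ - x₂)/2 =
      A + H + y₁ + y₂ - x₁ - x₂ by ring,
    show A + (H + y₁ + y₂ - x₁ - x₂)/2 - (H + y₁ + y₂ - x₁ - x₂)/2 = A by ring] at W
  exact W

end EllProof
end


open EllProof

/-- the symmetrized function
β(x₁,x₂,y₁,y₂,α) = Sym_{x₁,x₂}[ϑ(α y₁/x₁) ϑ(y₂/x₁) ϑ(h y₁/x₂) ϑ(α h y₂/x₂)·ϑ(h x₂/x₁)/ϑ(x₂/x₁)]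
is symmetric in y₁, y₂ (stated in additive variables, with x = e^{2πiX} etc.). -/
theorem beta_symmetric_in_y (τ : ℂ) (hτ : 0 < τ.im) (H : ℂ)
    (f : ℂ → ℂ → ℂ → ℂ → ℂ → ℂ)
    (hf : ∀ x₁ x₂ y₁ y₂ A : ℂ,
      f x₁ x₂ y₁ y₂ A =
        ellTheta τ (A + y₁ - x₁) * ellTheta τ (y₂ - x₁) * ellTheta τ (H + y₁ - x₂) *
            ellTheta τ (A + H + y₂ - x₂) * ellTheta τ (H + x₂ - x₁) /
          ellTheta τ (x₂ - x₁))
    (β : ℂ → ℂ → ℂ → ℂ → ℂ → ℂ)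
    (hβ : ∀ x₁ x₂ y₁ y₂ A : ℂ,
      β x₁ x₂ y₁ y₂ A = f x₁ x₂ y₁ y₂ A + f x₂ x₁ y₁ y₂ A) :
    ∀ x₁ x₂ y₁ y₂ A : ℂ, β x₁ x₂ y₁ y₂ A = β x₁ x₂ y₂ y₁ A := by
  intro x₁ x₂ y₁ y₂ A
  rw [hβ, hβ, hf x₁ x₂ y₁ y₂ A, hf x₂ x₁ y₁ y₂ A, hf x₁ x₂ y₂ y₁ A, hf x₂ x₁ y₂ y₁ A]
  have hodd3 : ellTheta τ (x₁ - x₂) = -ellTheta τ (x₂ - x₁) := by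
    rw [show x₁ - x₂ = -(x₂ - x₁) by ring, theta_odd]
  rw [hodd3, div_neg, div_neg, ← sub_eq_add_neg, ← sub_eq_add_neg, div_sub_div_same,
    div_sub_div_same]
  congr 1
  have W1 := bracket hτ H x₁ x₂ y₁ y₂ A
  have W2 := bracket hτ H x₂ x₁ y₁ y₂ A
  rw [show A + H + y₁ + y₂ - x₂ - x₁ = A + H + y₁ + y₂ - x₁ - x₂ by ring] at W2
  have o1 : ellTheta τ (x₂ - x₁ - H) = -ellTheta τ (H + x₁ - x₂) := by
    rw [show x₂ - x₁ - H = -(H + x₁ - x₂) by ring, theta_odd]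
  have o2 : ellTheta τ (x₁ - x₂ - H) = -ellTheta τ (H + x₂ - x₁) := by
    rw [show x₁ - x₂ - H = -(H + x₂ - x₁) by ring, theta_odd]
  linear_combination ellTheta τ (H + x₂ - x₁) * W1 - ellTheta τ (H + x₁ - x₂) * W2 +
    (ellTheta τ (y₁ - y₂) * (ellTheta τ (A + H + y₁ + y₂ - x₁ - x₂) * ellTheta τ A)) *
      (ellTheta τ (H + x₂ - x₁) * o1 - ellTheta τ (H + x₁ - x₂) * o2)
end

section
/- Minkowski-sum cancellation for convex polytopes: if P, Q, T are convex polytopes (convex hulls of finite point sets) in ℝⁿ and T + P ⊆ T + Q (Minkowski sums), then P ⊆ Q. -/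
open scoped Pointwise

/-- Minkowski-sum cancellation for convex polytopes in ℝⁿ:
if `T + P ⊆ T + Q` then `P ⊆ Q`, where `P, Q, T` are convex hulls of finite
point sets and `T` is nonempty. -/
theorem minkowski_cancellation (n : ℕ) (A B C : Set (Fin n → ℝ))
    (hA : A.Finite) (hB : B.Finite) (hC : C.Finite) (hCne : C.Nonempty)
    (h : convexHull ℝ C + convexHull ℝ A ⊆ convexHull ℝ C + convexHull ℝ B) :
    convexHull ℝ A ⊆ convexHull ℝ B := by
  intro x hx
  have hBclosed : IsClosed (convexHull ℝ B) := (hB.isCompact_convexHull (𝕜 := ℝ)).isClosed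
  obtain ⟨M, hM⟩ := (hC.isCompact_convexHull (𝕜 := ℝ)).isBounded.exists_norm_le
  obtain ⟨c0, hc0⟩ := hCne
  have hc0' : c0 ∈ convexHull ℝ C := subset_convexHull ℝ C hc0
  have step : ∀ c' : {y // y ∈ convexHull ℝ C},
      ∃ p : {y // y ∈ convexHull ℝ C} × {y // y ∈ convexHull ℝ B},
        (c' : Fin n → ℝ) + x = ↑p.1 + ↑p.2 := by
    intro c'
    have hmem : (c' : Fin n → ℝ) + x ∈ convexHull ℝ C + convexHull ℝ B :=
      h (Set.add_mem_add c'.2 hx)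
    obtain ⟨u, hu, v, hv, huv⟩ := hmem
    exact ⟨(⟨u, hu⟩, ⟨v, hv⟩), huv.symm⟩
  choose F hF using step
  set cseq : ℕ → {y // y ∈ convexHull ℝ C} :=
    fun k => Nat.rec ⟨c0, hc0'⟩ (fun _ prev => (F prev).1) k with hcseq
  set b : ℕ → Fin n → ℝ := fun k => ((F (cseq k)).2 : Fin n → ℝ) with hb
  have hbmem : ∀ k, b k ∈ convexHull ℝ B := fun k => (F (cseq k)).2.2
  have key : ∀ k, (cseq k : Fin n → ℝ) + x = (cseq (k+1) : Fin n → ℝ) + b k :=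
    fun k => hF (cseq k)
  have claim : ∀ k : ℕ, (cseq 0 : Fin n → ℝ) + (k : ℝ) • x
      = (cseq k : Fin n → ℝ) + ∑ i ∈ Finset.range k, b i := by
    intro k
    induction k with
    | zero => simp
    | succ k ih =>
      have hk := key k
      push_cast
      rw [add_smul, one_smul, ← add_assoc, ih, Finset.sum_range_succ,
        add_right_comm ((cseq k : Fin n → ℝ)) (∑ i ∈ Finset.range k, b i) x, hk]
      abel
  set a : ℕ → Fin n → ℝ :=
    fun m => ((m : ℝ) + 1)⁻¹ • ∑ i ∈ Finset.range (m+1), b i with ha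
  have hmpos : ∀ m : ℕ, (0:ℝ) < (m : ℝ) + 1 := fun m => by positivity
  have hamem : ∀ m, a m ∈ convexHull ℝ B := by
    intro m
    have hconv := convex_convexHull ℝ B
    have hsum := hconv.sum_mem (t := Finset.range (m+1))
      (w := fun _ => ((m:ℝ)+1)⁻¹) (fun i _ => by positivity)
      (by
        rw [Finset.sum_const, Finset.card_range, nsmul_eq_mul]
        push_cast
        field_simp)
      (fun i _ => hbmem i)
    simpa [ha, Finset.smul_sum] using hsum
  have haform : ∀ m, a m
      = x - ((m:ℝ)+1)⁻¹ • ((cseq (m+1) : Fin n → ℝ) - (cseq 0 : Fin n → ℝ)) := by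
    intro m
    have hc := claim (m+1)
    have hsum : ∑ i ∈ Finset.range (m+1), b i
        = (cseq 0 : Fin n → ℝ) + ((m:ℝ)+1) • x - (cseq (m+1) : Fin n → ℝ) := by
      push_cast at hc
      rw [eq_sub_iff_add_eq, add_comm]
      exact hc.symm
    rw [ha]
    simp only [hsum, smul_sub, smul_add, inv_smul_smul₀ (hmpos m).ne']
    abel
  have hd : Filter.Tendsto
      (fun m : ℕ => ((m:ℝ)+1)⁻¹ • ((cseq (m+1) : Fin n → ℝ) - (cseq 0 : Fin n → ℝ)))
      Filter.atTop (nhds 0) := by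
    apply squeeze_zero_norm (a := fun m : ℕ => (2*M) * (1/((m:ℝ)+1)))
    · intro m
      have h1 : ‖(cseq (m+1) : Fin n → ℝ)‖ ≤ M := hM _ (cseq (m+1)).2
      have h2 : ‖(cseq 0 : Fin n → ℝ)‖ ≤ M := hM _ (cseq 0).2
      rw [norm_smul]
      have hn : ‖(cseq (m+1) : Fin n → ℝ) - (cseq 0 : Fin n → ℝ)‖ ≤ 2*M := by
        calc ‖(cseq (m+1) : Fin n → ℝ) - (cseq 0 : Fin n → ℝ)‖
            ≤ ‖(cseq (m+1) : Fin n → ℝ)‖ + ‖(cseq 0 : Fin n → ℝ)‖ := norm_sub_le _ _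
          _ ≤ 2*M := by linarith
      have : ‖(((m:ℝ)+1)⁻¹ : ℝ)‖ = ((m:ℝ)+1)⁻¹ := by
        rw [Real.norm_eq_abs, abs_of_pos (by positivity)]
      rw [this]
      rw [mul_comm (2*M)]
      rw [one_div]
      exact mul_le_mul_of_nonneg_left hn (by positivity)
    · have := tendsto_one_div_add_atTop_nhds_zero_nat (𝕜 := ℝ)
      have h' := this.const_mul (2*M)
      simpa using h'
  have hlim : Filter.Tendsto a Filter.atTop (nhds x) := by
    have : Filter.Tendsto (fun m : ℕ =>
        x - ((m:ℝ)+1)⁻¹ • ((cseq (m+1) : Fin n → ℝ) - (cseq 0 : Fin n → ℝ)))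
        Filter.atTop (nhds (x - 0)) := Filter.Tendsto.const_sub x hd
    rw [sub_zero] at this
    exact this.congr (fun m => (haform m).symm)
  have hxcl : x ∈ closure (convexHull ℝ B) :=
    mem_closure_of_tendsto hlim (Filter.Eventually.of_forall hamem)
  rwa [hBclosed.closure_eq] at hxcl
end
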